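/- arXiv:1507.06644 — 3 statements merged into one kernel-verified Lean document; each statement's English description precedes it below -/
import Mathlib

section
/- Let M be a model category, let f : X₀ → X₁ and g : Y₀ → Y₁ be morphisms of M, and let τ : f → g be a morphism in Arrow M with components τ₀ : X₀ → Y₀ and τ₁ : X₁ → Y₁. Then there exist a morphism h : Z₀ → Z₁ of M and morphisms σ : f → h and ρ : h → g in Arrow M with ρ ∘ σ = τ such that: σ₀ : X₀ → Z₀ is a cofibration in M; the corner map Z₀ ⊔_{X₀} X₁ → Z₁ of σ is a trivial cofibration in M; ρ₀ : Z₀ → Y₀ is a trivial fibration in M; and ρ₁ : Z₁ → Y₁ is a fibration in M. -/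
open CategoryTheory CategoryTheory.Limits

universe v u

/-- `f` is a retract of `g` in the arrow category. -/
def IsRetract {C : Type u} [Category.{v} C] {X Y X' Y' : C} (f : X ⟶ Y) (g : X' ⟶ Y') : Prop :=
  ∃ (i : X ⟶ X') (r : X' ⟶ X) (i' : Y ⟶ Y') (r' : Y' ⟶ Y),
    i ≫ r = 𝟙 X ∧ i' ≫ r' = 𝟙 Y ∧ i ≫ g = f ≫ i' ∧ g ≫ r' = r ≫ f

/-- A model structure on a category: three classes of morphisms (weak equivalences,
cofibrations, fibrations) satisfying Quillen's axioms (two-out-of-three, closure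
under retracts, lifting, and factorization). -/
structure ModelStructure (C : Type u) [Category.{v} C] where
  W : MorphismProperty C
  Cof : MorphismProperty C
  Fib : MorphismProperty C
  w_comp : ∀ {X Y Z : C} (f : X ⟶ Y) (g : Y ⟶ Z), W f → W g → W (f ≫ g)
  w_cancel_left : ∀ {X Y Z : C} (f : X ⟶ Y) (g : Y ⟶ Z), W f → W (f ≫ g) → W g
  w_cancel_right : ∀ {X Y Z : C} (f : X ⟶ Y) (g : Y ⟶ Z), W g → W (f ≫ g) → W f
  w_retract : ∀ {X Y X' Y' : C} (f : X ⟶ Y) (g : X' ⟶ Y'), IsRetract f g → W g → W f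
  cof_retract : ∀ {X Y X' Y' : C} (f : X ⟶ Y) (g : X' ⟶ Y'), IsRetract f g → Cof g → Cof f
  fib_retract : ∀ {X Y X' Y' : C} (f : X ⟶ Y) (g : X' ⟶ Y'), IsRetract f g → Fib g → Fib f
  lift_cof_trivFib : ∀ {A B X Y : C} (i : A ⟶ B) (p : X ⟶ Y),
    Cof i → Fib p → W p → HasLiftingProperty i p
  lift_trivCof_fib : ∀ {A B X Y : C} (i : A ⟶ B) (p : X ⟶ Y),
    Cof i → W i → Fib p → HasLiftingProperty i p
  factor_cof_trivFib : ∀ {X Y : C} (f : X ⟶ Y), ∃ (Z : C) (g : X ⟶ Z) (h : Z ⟶ Y),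
    Cof g ∧ Fib h ∧ W h ∧ g ≫ h = f
  factor_trivCof_fib : ∀ {X Y : C} (f : X ⟶ Y), ∃ (Z : C) (g : X ⟶ Z) (h : Z ⟶ Y),
    Cof g ∧ W g ∧ Fib h ∧ g ≫ h = f

variable {M : Type u} [Category.{v} M]

/-- An object is cofibrant if the map from the initial object is a cofibration. -/
def ModelStructure.Cofibrant [HasInitial M] (m : ModelStructure M) (X : M) : Prop :=
  m.Cof (initial.to X)

section Latching

variable {P : Type} [Preorder P] [HasColimitsOfSize.{0, 0} M]

/-- The latching object of `F : P ⥤ M` at `x`: the colimit of `F` over the full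
subcategory of all `y < x`. -/
noncomputable def latchingObj (F : P ⥤ M) (x : P) : M :=
  colimit (ObjectProperty.ι (fun y : P => y < x) ⋙ F)

/-- The canonical (latching) map `L_x F ⟶ F x`. -/
noncomputable def latchingMap (F : P ⥤ M) (x : P) : latchingObj F x ⟶ F.obj x :=
  colimit.desc (ObjectProperty.ι (fun y : P => y < x) ⋙ F)
    { pt := F.obj x
      ι :=
        { app := fun y => F.map (homOfLE y.property.le)
          naturality := by
            intro a b f
            dsimp
            rw [Category.comp_id, ← F.map_comp]
            rfl } }

/-- The map induced by a natural transformation on latching objects. -/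
noncomputable def latchingObjHom {F G : P ⥤ M} (τ : F ⟶ G) (x : P) :
    latchingObj F x ⟶ latchingObj G x :=
  colimMap (Functor.whiskerLeft (ObjectProperty.ι (fun y : P => y < x)) τ)

lemma latching_square {F G : P ⥤ M} (τ : F ⟶ G) (x : P) :
    latchingMap F x ≫ τ.app x = latchingObjHom τ x ≫ latchingMap G x := by
  apply colimit.hom_ext
  intro y
  simp only [latchingMap, latchingObjHom]
  erw [colimit.ι_desc_assoc, ι_colimMap_assoc, colimit.ι_desc]
  simp

/-- The relative latching map of `τ : F ⟶ G` at `x`: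
the induced map `(L_x G) ⊔_{L_x F} F x ⟶ G x`. -/
noncomputable def relLatchingMap {F G : P ⥤ M} (τ : F ⟶ G) (x : P) :
    pushout (latchingMap F x) (latchingObjHom τ x) ⟶ G.obj x :=
  pushout.desc (τ.app x) (latchingMap G x) (latching_square τ x)

end Latching

/-- The corner map (pushout-corner map) of a commutative square `τ : f ⟶ g`
in the arrow category: the canonical morphism `Y₀ ⊔_{X₀} X₁ ⟶ Y₁`. -/
noncomputable def cornerMap [HasPushouts M] {f g : Arrow M} (τ : f ⟶ g) :
    pushout τ.left f.hom ⟶ g.right :=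
  pushout.desc g.hom τ.right (Arrow.w τ)

/-- Any morphism `τ : f ⟶ g` of `Arrow M` factors as `σ ≫ ρ` where
`σ.left` is a cofibration, the corner map of `σ` is a trivial cofibration, `ρ.left`
is a trivial fibration and `ρ.right` is a fibration. -/
theorem statement2 [HasLimits M] [HasColimits M] (m : ModelStructure M)
    {f g : Arrow M} (τ : f ⟶ g) :
    ∃ (h : Arrow M) (σ : f ⟶ h) (ρ : h ⟶ g),
      σ ≫ ρ = τ ∧
      m.Cof σ.left ∧
      (m.Cof (cornerMap σ) ∧ m.W (cornerMap σ)) ∧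
      (m.Fib ρ.left ∧ m.W ρ.left) ∧
      m.Fib ρ.right := by
  obtain ⟨Z₀, σ₀, ρ₀, hσ₀cof, hρ₀fib, hρ₀w, hfac₀⟩ := m.factor_cof_trivFib τ.left
  -- the pushout Q = Z₀ ⊔_{X₀} X₁
  have hcomm : σ₀ ≫ ρ₀ ≫ g.hom = f.hom ≫ τ.right := by
    rw [← Category.assoc, hfac₀, Arrow.w]
  let q : pushout σ₀ f.hom ⟶ g.right :=
    pushout.desc (ρ₀ ≫ g.hom) τ.right hcomm
  obtain ⟨Z₁, j, ρ₁, hjcof, hjw, hρ₁fib, hfac₁⟩ := m.factor_trivCof_fib q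
  refine ⟨Arrow.mk (pushout.inl σ₀ f.hom ≫ j),
    Arrow.homMk (u := σ₀) (v := pushout.inr σ₀ f.hom ≫ j) (by
      simp only [Arrow.mk_hom, ← Category.assoc, pushout.condition]),
    Arrow.homMk (u := ρ₀) (v := ρ₁) (by
      simp only [Arrow.mk_hom, Category.assoc, hfac₁]
      exact (pushout.inl_desc _ _ hcomm).symm), ?_, hσ₀cof, ?_, ⟨hρ₀fib, hρ₀w⟩, hρ₁fib⟩
  · ext
    · exact hfac₀
    · simp only [Arrow.comp_right, Arrow.homMk_right, Category.assoc, hfac₁]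
      exact pushout.inr_desc _ _ hcomm
  · have : cornerMap (f := f) (g := Arrow.mk (pushout.inl σ₀ f.hom ≫ j))
        (Arrow.homMk (u := σ₀) (v := pushout.inr σ₀ f.hom ≫ j) (by
          simp only [Arrow.mk_hom, ← Category.assoc, pushout.condition])) = j := by
      apply pushout.hom_ext
      · exact pushout.inl_desc _ _ _
      · exact pushout.inr_desc _ _ _
    rw [this]
    exact ⟨hjcof, hjw⟩
end

section
/- Let N and M be model categories, n a natural number, and F : Nⁿ ⥤ M a functor that is cofibrant in the following sense: for all cofibrations g_i : Y_i → Z_i between cofibrant objects of N (i = 1,…,n) and every subset S ⊆ {1,…,n} such that g_i is a trivial cofibration for every i ∈ S, the induced cube F(g₁,…,gₙ) : 2ⁿ ⥤ M has all of its latching maps cofibrations in M, and its latching map at every x ∈ 2ⁿ with x_i = true for some i ∈ S is a trivial cofibration in M. Then for any weak equivalences f_i : Y_i → Z_i between cofibrant objects of N (i = 1,…,n), the induced morphism F(Y₁,…,Yₙ) → F(Z₁,…,Zₙ) is a weak equivalence between cofibrant objects of M. -/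
set_option maxHeartbeats 1000000
set_option synthInstance.maxHeartbeats 1000000
open CategoryTheory CategoryTheory.Limits
universe v u

variable {M : Type u} [Category.{v} M]

section MSBasics
variable {C : Type u} [Category.{v} C] (m : ModelStructure C)

lemma ms_w_id (X : C) : m.W (𝟙 X) := by
  obtain ⟨Z, g, h, _, hWg, _, hgh⟩ := m.factor_trivCof_fib (𝟙 X)
  exact m.w_cancel_right (𝟙 X) g hWg (by rwa [Category.id_comp])

lemma ms_w_of_iso {X Y : C} (f : X ⟶ Y) [IsIso f] : m.W f := by
  refine m.w_retract f (𝟙 X) ⟨𝟙 X, 𝟙 X, inv f, f, by simp, by simp, by simp, by simp⟩ (ms_w_id m X)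

lemma ms_cof_id (X : C) : m.Cof (𝟙 X) := by
  obtain ⟨Z, g, h, hCg, _, _, hgh⟩ := m.factor_cof_trivFib (𝟙 X)
  exact m.cof_retract (𝟙 X) g ⟨𝟙 X, 𝟙 X, g, h, by simp, hgh, by simp, by simp [hgh]⟩ hCg

lemma ms_cof_of_llp {A B : C} (i : A ⟶ B)
    (h : ∀ {X Y : C} (p : X ⟶ Y), m.Fib p → m.W p → HasLiftingProperty i p) : m.Cof i := by
  obtain ⟨Z, g, p, hCg, hFp, hWp, hgp⟩ := m.factor_cof_trivFib i
  have hlp := h p hFp hWp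
  have sq : CommSq g i p (𝟙 B) := ⟨by simp [hgp]⟩
  exact m.cof_retract i g ⟨𝟙 A, 𝟙 A, sq.lift, p, by simp, sq.fac_right, by simp [sq.fac_left], by
    simp [hgp]⟩ hCg

lemma ms_cof_comp {X Y Z : C} (f : X ⟶ Y) (g : Y ⟶ Z) (hf : m.Cof f) (hg : m.Cof g) :
    m.Cof (f ≫ g) := by
  refine ms_cof_of_llp m _ (fun p hFp hWp => ?_)
  have := m.lift_cof_trivFib f p hf hFp hWp
  have := m.lift_cof_trivFib g p hg hFp hWp
  infer_instance

variable [HasInitial C]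

lemma ms_cofibrant_of_cof {X Y : C} (f : X ⟶ Y) (hX : m.Cofibrant X) (hf : m.Cof f) :
    m.Cofibrant Y := by
  have : initial.to Y = initial.to X ≫ f := initial.hom_ext _ _
  rw [ModelStructure.Cofibrant, this]
  exact ms_cof_comp m _ _ hX hf

variable [HasPushouts C]

lemma ms_cof_pushout_inl (A B : C) (hB : m.Cofibrant B) :
    m.Cof (pushout.inl (initial.to A) (initial.to B)) := by
  refine ms_cof_of_llp m _ (fun p hFp hWp => ?_)
  have : HasLiftingProperty (initial.to B) p := m.lift_cof_trivFib _ p hB hFp hWp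
  constructor
  intro u v sq
  have sq2 : CommSq (initial.to _) (initial.to B) p (pushout.inr (initial.to A) (initial.to B) ≫ v) :=
    ⟨initial.hom_ext _ _⟩
  exact ⟨⟨⟨pushout.desc u sq2.lift (initial.hom_ext _ _), pushout.inl_desc _ _ _, by
    apply pushout.hom_ext
    · erw [pushout.inl_desc_assoc]; exact sq.w
    · erw [pushout.inr_desc_assoc]; exact sq2.fac_right⟩⟩⟩

lemma ms_cof_pushout_inr (A B : C) (hA : m.Cofibrant A) :
    m.Cof (pushout.inr (initial.to A) (initial.to B)) := by
  refine ms_cof_of_llp m _ (fun p hFp hWp => ?_)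
  have : HasLiftingProperty (initial.to A) p := m.lift_cof_trivFib _ p hA hFp hWp
  constructor
  intro u v sq
  have sq2 : CommSq (initial.to _) (initial.to A) p (pushout.inl (initial.to A) (initial.to B) ≫ v) :=
    ⟨initial.hom_ext _ _⟩
  exact ⟨⟨⟨pushout.desc sq2.lift u (initial.hom_ext _ _), pushout.inr_desc _ _ _, by
    apply pushout.hom_ext
    · erw [pushout.inl_desc_assoc]; exact sq2.fac_right
    · erw [pushout.inr_desc_assoc]; exact sq.w⟩⟩⟩

end MSBasics

attribute [local instance 2000] Preorder.smallCategory

section Cube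

variable {N : Type u} [Category.{v} N] {ι : Type}
variable {Y Z : ι → N} (g : ∀ i, Y i ⟶ Z i)

/-- The edge of the cube in direction `i` between `a ≤ b` in `Bool`. -/
def cubeEdge {i : ι} : ∀ (a b : Bool), a ≤ b → ((cond a (Z i) (Y i)) ⟶ (cond b (Z i) (Y i)))
  | false, false, _ => 𝟙 _
  | false, true, _ => g i
  | true, true, _ => 𝟙 _
  | true, false, h => absurd h (by decide)

lemma cubeEdge_self {i : ι} (a : Bool) (h : a ≤ a) :
    cubeEdge (i := i) g a a h = 𝟙 (cond a (Z i) (Y i)) := by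
  cases a <;> rfl

lemma cubeEdge_comp {i : ι} (a b c : Bool) (hab : a ≤ b) (hbc : b ≤ c) (hac : a ≤ c) :
    cubeEdge (i := i) g a c hac = cubeEdge g a b hab ≫ cubeEdge g b c hbc := by
  cases a <;> cases b <;> cases c <;>
    first
      | exact absurd hab (by decide)
      | exact absurd hbc (by decide)
      | simp [cubeEdge]

/-- The cube `2^ι ⥤ Nⁱ` induced by the family of morphisms `g i : Y i ⟶ Z i`:
the vertex `x` is sent to the tuple whose `i`-th entry is `Y i` if `x i = false`
and `Z i` if `x i = true`. -/
noncomputable def cube : (ι → Bool) ⥤ (ι → N) where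
  obj x := fun i => cond (x i) (Z i) (Y i)
  map {x y} h := fun i => cubeEdge g (x i) (y i) (leOfHom h i)
  map_id x := by
    funext i
    exact cubeEdge_self g (x i) le_rfl
  map_comp {x y z} h h' := by
    funext i
    exact cubeEdge_comp g (x i) (y i) (z i) (leOfHom h i) (leOfHom h' i) _

end Cube

section CofibrantFunctor

variable {N : Type u} [Category.{v} N] [HasColimitsOfSize.{0, 0} M]

/-- A functor `F : Nⁱ ⥤ M` is cofibrant if for every family of cofibrations
`g i : Y i ⟶ Z i` between cofibrant objects of `N` and every subset `S` of the
index set such that `g i` is a trivial cofibration for all `i ∈ S`, all latching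
maps of the induced cube `cube g ⋙ F : 2^ι ⥤ M` are cofibrations in `M`, and are
trivial cofibrations at every vertex `x` with `x i = true` for some `i ∈ S`. -/
def IsCofibrantFunctor [HasInitial N] (mN : ModelStructure N) (mM : ModelStructure M)
    {ι : Type} (F : (ι → N) ⥤ M) : Prop :=
  ∀ (Y Z : ι → N) (g : ∀ i, Y i ⟶ Z i),
    (∀ i, mN.Cofibrant (Y i)) → (∀ i, mN.Cof (g i)) →
    ∀ S : Set ι, (∀ i ∈ S, mN.W (g i)) →
      (∀ x : ι → Bool, mM.Cof (latchingMap (cube g ⋙ F) x)) ∧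
      (∀ x : ι → Bool, (∃ i ∈ S, x i = true) →
        mM.Cof (latchingMap (cube g ⋙ F) x) ∧ mM.W (latchingMap (cube g ⋙ F) x))

end CofibrantFunctor


section Retracts
variable [HasColimitsOfSize.{0,0} M] {n : ℕ}

lemma retract_bot (D : (Fin n → Bool) ⥤ M) [HasInitial M] :
    IsRetract (initial.to (D.obj (fun _ => false))) (latchingMap D (fun _ => false)) := by
  have hy : ∀ (y : ObjectProperty.FullSubcategory (fun y : Fin n → Bool => y < fun _ => false)), False :=
    fun y => y.property.not_ge (fun j => Bool.false_le _)
  refine ⟨initial.to _, colimit.desc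
      ((ObjectProperty.ι fun y : Fin n → Bool => y < fun _ => false) ⋙ D) ⟨⊥_ M,
    { app := fun y => (hy y).elim, naturality := fun a b f => (hy a).elim }⟩,
    𝟙 _, 𝟙 _, initial.hom_ext _ _, by simp, initial.hom_ext _ _, ?_⟩
  apply colimit.hom_ext
  intro y
  exact (hy y).elim

lemma retract_edge (D : (Fin n → Bool) ⥤ M) (x : Fin n → Bool)
    (hbx : (fun _ => false) < x) (hy : ∀ y : Fin n → Bool, y < x → y ≤ fun _ => false) :
    IsRetract (D.map (homOfLE hbx.le)) (latchingMap D x) := by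
  refine ⟨colimit.ι (ObjectProperty.ι (fun y : Fin n → Bool => y < x) ⋙ D)
      ⟨fun _ => false, hbx⟩,
    colimit.desc ((ObjectProperty.ι fun y : Fin n → Bool => y < x) ⋙ D)
      ⟨D.obj (fun _ => false),
      { app := fun y => D.map (homOfLE (hy y.obj y.property)),
        naturality := fun a b f => by
          dsimp
          rw [Category.comp_id, ← D.map_comp]
          exact congrArg D.map (Subsingleton.elim _ _) }⟩,
    𝟙 _, 𝟙 _, ?_, by simp, ?_, ?_⟩
  · erw [colimit.ι_desc]
    exact (congrArg D.map (Subsingleton.elim _ (𝟙 _))).trans (D.map_id _)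
  · erw [Category.comp_id, latchingMap, colimit.ι_desc]
  · apply colimit.hom_ext
    intro y
    erw [Category.comp_id, latchingMap, colimit.ι_desc, colimit.ι_desc_assoc]
    dsimp
    rw [← D.map_comp]
    exact congrArg D.map (Subsingleton.elim _ _)

end Retracts

section CubeHelpers
variable {N : Type u} [Category.{v} N] {ι : Type} {Y Z : ι → N} (g : ∀ i, Y i ⟶ Z i)

lemma cubeEdge_mem (Q : MorphismProperty N) (hid : ∀ X : N, Q (𝟙 X)) {i : ι}
    (hg : Q (g i)) (a b : Bool) (h : a ≤ b) : Q (cubeEdge (i := i) g a b h) := by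
  cases a <;> cases b <;>
    first
      | exact absurd h (by decide)
      | exact hid _
      | exact hg

lemma cubeEdge_mem_ft (Q : MorphismProperty N) {i : ι} (hg : Q (g i)) (a b : Bool)
    (ha : a = false) (hb : b = true) (h : a ≤ b) : Q (cubeEdge (i := i) g a b h) := by
  subst ha; subst hb; exact hg

lemma cubeEdge_isIso_of_eq {i : ι} (a b : Bool) (hab : a = b) (h : a ≤ b) :
    IsIso (cubeEdge (i := i) g a b h) := by
  subst hab
  rw [cubeEdge_self]
  infer_instance

lemma pi_eqToHom {X X' : ι → N} (h : X = X') (j : ι) :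
    (eqToHom h : X ⟶ X') j = eqToHom (congrFun h j) := by
  subst h; rfl

lemma pi_isIso {X X' : ι → N} (f : X ⟶ X') (hf : ∀ j, IsIso (f j)) : IsIso f := by
  refine ⟨⟨fun j => inv (f j), funext fun j => ?_, funext fun j => ?_⟩⟩
  · exact IsIso.hom_inv_id (f j)
  · exact IsIso.inv_hom_id (f j)

lemma cubeEdge_conj {i : ι} (a b : Bool) (ha : a = false) (hb : b = true) (h : a ≤ b)
    (e1 : Y i = cond a (Z i) (Y i)) (e2 : cond b (Z i) (Y i) = Z i) :
    eqToHom e1 ≫ cubeEdge g a b h ≫ eqToHom e2 = g i := by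
  subst ha; subst hb
  simp [cubeEdge]

end CubeHelpers

section Chain
variable {N : Type u} [Category.{v} N] {n : ℕ} {Y C : Fin n → N}

/-- Chain objects interpolating between `Y` and `C`. -/
def chainA (Y C : Fin n → N) (k : ℕ) : Fin n → N :=
  fun j => cond (decide ((j : ℕ) < k)) (C j) (Y j)

lemma decide_lt_succ_le (j k : ℕ) : (decide (j < k) : Bool) ≤ decide (j < k + 1) := by
  by_cases h : j < k
  · simp [h, Nat.lt_succ_of_lt h]
  · simp [h]

/-- Chain step morphisms. -/
def chainG (u : ∀ i, Y i ⟶ C i) (k : ℕ) : chainA Y C k ⟶ chainA Y C (k + 1) :=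
  fun j => cubeEdge (i := j) u (decide ((j : ℕ) < k)) (decide ((j : ℕ) < k + 1))
    (decide_lt_succ_le _ _)

/-- Composite of chain steps. -/
def chainPi (u : ∀ i, Y i ⟶ C i) : ∀ k : ℕ, (chainA Y C 0 ⟶ chainA Y C k)
  | 0 => 𝟙 _
  | k + 1 => chainPi u k ≫ chainG u k

lemma chainPi_app (u : ∀ i, Y i ⟶ C i) (k : ℕ) (j : Fin n) :
    chainPi u k j = cubeEdge (i := j) u (decide ((j : ℕ) < 0)) (decide ((j : ℕ) < k))
      (by simp) := by
  induction k with
  | zero => exact cubeEdge_self u _ _ |>.symm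
  | succ k ih =>
    show chainPi u k j ≫ chainG u k j = _
    rw [ih]
    exact (cubeEdge_comp u _ _ _ _ _ _).symm

lemma chainA_zero : chainA Y C 0 = Y := by
  funext j
  simp [chainA]

lemma chainA_top : chainA Y C n = C := by
  funext j
  simp [chainA, j.isLt]

lemma chain_total (u : ∀ i, Y i ⟶ C i) :
    (u : Y ⟶ C) = eqToHom chainA_zero.symm ≫ chainPi u n ≫ eqToHom chainA_top := by
  funext j
  rw [Pi.comp_apply, Pi.comp_apply, Functor.eqToHom_proj, Functor.eqToHom_proj, chainPi_app]
  exact (cubeEdge_conj u _ _ (by simp) (by simp [j.isLt]) _ _ _).symm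

end Chain

section Key
variable {N : Type u} [Category.{v} N] [HasColimitsOfSize.{0,0} M] [HasInitial N]
  (mN : ModelStructure N) (mM : ModelStructure M) {n : ℕ} (F : (Fin n → N) ⥤ M)

lemma key_step (hF : IsCofibrantFunctor mN mM F) (Y C : Fin n → N) (u : ∀ i, Y i ⟶ C i)
    (hY : ∀ i, mN.Cofibrant (Y i)) (hC : ∀ i, mN.Cofibrant (C i))
    (hcof : ∀ i, mN.Cof (u i)) (hw : ∀ i, mN.W (u i)) (k : ℕ) (hk : k < n) :
    mM.W (F.map (chainG u k)) := by
  have hAcof : ∀ j : Fin n, mN.Cofibrant (chainA Y C k j) := by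
    intro j
    show mN.Cofibrant (cond (decide ((j : ℕ) < k)) (C j) (Y j))
    cases decide ((j : ℕ) < k)
    · exact hY j
    · exact hC j
  have hgcof : ∀ j, mN.Cof (chainG u k j) := fun j =>
    cubeEdge_mem u mN.Cof (ms_cof_id mN) (hcof j) _ _ _
  obtain ⟨h1, h2⟩ := hF (chainA Y C k) (chainA Y C (k + 1)) (chainG u k) hAcof hgcof
    {i : Fin n | (i : ℕ) = k}
    (fun i hi => by
      have hik : (i : ℕ) = k := hi
      exact cubeEdge_mem_ft u mN.W (hw i) _ _
        (by simp only [decide_eq_false_iff_not]; omega)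
        (by simp only [decide_eq_true_eq]; omega) _)
  set D := cube (chainG u k) ⋙ F with hD
  set x : Fin n → Bool := fun j => decide ((j : ℕ) = k) with hx
  have hxk : x ⟨k, hk⟩ = true := by simp [hx]
  have hbx : (fun _ => false : Fin n → Bool) < x := by
    constructor
    · intro j; exact Bool.false_le _
    · intro hle'
      have h : x ⟨k, hk⟩ ≤ false := hle' ⟨k, hk⟩
      rw [hxk] at h
      exact absurd h (by decide)
  have hy : ∀ y : Fin n → Bool, y < x → y ≤ fun _ => false := by
    intro y hyx j
    show y j ≤ false
    cases hyj : y j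
    · exact le_refl _
    · exfalso
      have hxj : y j ≤ x j := hyx.le j
      rw [hyj] at hxj
      have hxj' : x j = true := by
        cases hxt : x j
        · rw [hxt] at hxj; exact absurd hxj (by decide)
        · rfl
      have hjk : (j : ℕ) = k := by simpa [hx] using hxj'
      apply hyx.2
      intro j'
      show x j' ≤ y j'
      cases hx' : x j'
      · exact Bool.false_le _
      · have hj'k : (j' : ℕ) = k := by simpa [hx] using hx'
        have : j' = j := Fin.ext (hj'k.trans hjk.symm)
        rw [this, hyj]
  have hW := (h2 x ⟨⟨k, hk⟩, rfl, hxk⟩).2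
  have hWedge : mM.W (D.map (homOfLE hbx.le)) := mM.w_retract _ _ (retract_edge D x hbx hy) hW
  have hx' : x ≤ (fun _ => true : Fin n → Bool) := fun j => Bool.le_true _
  haveI hiso : IsIso ((cube (chainG u k)).map (homOfLE hx')) := by
    apply pi_isIso
    intro j
    show IsIso (cubeEdge (i := j) (chainG u k) (x j) true (Bool.le_true _))
    by_cases hj : (j : ℕ) = k
    · exact cubeEdge_isIso_of_eq (chainG u k) _ _ (by simp [hx, hj]) _
    · have : MorphismProperty.isomorphisms N (cubeEdge (i := j) (chainG u k) (x j) true (Bool.le_true _)) := by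
        apply cubeEdge_mem
        · intro X
          exact (inferInstance : IsIso (𝟙 X))
        · show IsIso (chainG u k j)
          exact cubeEdge_isIso_of_eq u _ _ (by rw [decide_eq_decide]; omega) _
      exact this
  have hdecomp : F.map (chainG u k) = D.map (homOfLE hbx.le) ≫ D.map (homOfLE hx') := by
    rw [← D.map_comp]
    rfl
  rw [hdecomp]
  refine mM.w_comp _ _ hWedge ?_
  haveI : IsIso (D.map (homOfLE hx')) := by
    rw [hD, Functor.comp_map]
    infer_instance
  exact @ms_w_of_iso _ _ mM _ _ _ this

end Key

lemma keyW {N : Type u} [Category.{v} N] [HasColimitsOfSize.{0,0} M] [HasInitial N]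
    (mN : ModelStructure N) (mM : ModelStructure M) {n : ℕ} (F : (Fin n → N) ⥤ M)
    (hF : IsCofibrantFunctor mN mM F) (Y C : Fin n → N) (u : ∀ i, Y i ⟶ C i)
    (hY : ∀ i, mN.Cofibrant (Y i)) (hC : ∀ i, mN.Cofibrant (C i))
    (hcof : ∀ i, mN.Cof (u i)) (hw : ∀ i, mN.W (u i)) :
    mM.W (F.map (u : Y ⟶ C)) := by
  have hchain : ∀ k, k ≤ n → mM.W (F.map (chainPi u k)) := by
    intro k
    induction k with
    | zero =>
      intro _
      rw [show chainPi u 0 = 𝟙 (chainA Y C 0) from rfl, F.map_id]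
      exact ms_w_id mM _
    | succ k ih =>
      intro hk
      show mM.W (F.map (chainPi u k ≫ chainG u k))
      rw [F.map_comp]
      exact mM.w_comp _ _ (ih (Nat.le_of_succ_le hk))
        (key_step mN mM F hF Y C u hY hC hcof hw k hk)
  rw [chain_total u, F.map_comp, F.map_comp]
  exact mM.w_comp _ _ (ms_w_of_iso mM _)
    (mM.w_comp _ _ (hchain n le_rfl) (ms_w_of_iso mM _))

/-- A cofibrant functor `F : Nⁿ ⥤ M` takes tuples of weak
equivalences between cofibrant objects to weak equivalences between cofibrant
objects. -/
theorem statement6 {N : Type u} [Category.{v} N]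
    [HasLimits N] [HasColimits N] [HasLimits M] [HasColimits M]
    (mN : ModelStructure N) (mM : ModelStructure M)
    (n : ℕ) (F : (Fin n → N) ⥤ M)
    (hF : IsCofibrantFunctor mN mM F)
    (Y Z : Fin n → N) (f : ∀ i, Y i ⟶ Z i)
    (hYcof : ∀ i, mN.Cofibrant (Y i)) (hZcof : ∀ i, mN.Cofibrant (Z i))
    (hf : ∀ i, mN.W (f i)) :
    mM.W (F.map (f : Y ⟶ Z)) ∧ mM.Cofibrant (F.obj Y) ∧ mM.Cofibrant (F.obj Z) := by
  have hcofY : mM.Cofibrant (F.obj Y) := by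
    have h := (hF Y Y (fun i => 𝟙 (Y i)) hYcof (fun i => ms_cof_id mN _) ∅
      (fun i hi => absurd hi (Set.notMem_empty i))).1 (fun _ => false)
    exact mM.cof_retract _ _ (retract_bot (cube (fun i => 𝟙 (Y i)) ⋙ F)) h
  have hcofZ : mM.Cofibrant (F.obj Z) := by
    have h := (hF Z Z (fun i => 𝟙 (Z i)) hZcof (fun i => ms_cof_id mN _) ∅
      (fun i hi => absurd hi (Set.notMem_empty i))).1 (fun _ => false)
    exact mM.cof_retract _ _ (retract_bot (cube (fun i => 𝟙 (Z i)) ⋙ F)) h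
  -- Ken Brown factorization, componentwise
  have hfact := fun i => mN.factor_cof_trivFib
    (pushout.desc (f := initial.to (Y i)) (g := initial.to (Z i)) (f i) (𝟙 (Z i)) (initial.hom_ext _ _))
  choose Cc q p hq hpfib hwp hqp using hfact
  set u : ∀ i, Y i ⟶ Cc i := fun i => pushout.inl _ _ ≫ q i with hu
  set v : ∀ i, Z i ⟶ Cc i := fun i => pushout.inr _ _ ≫ q i with hv
  have hu_cof : ∀ i, mN.Cof (u i) := fun i =>
    ms_cof_comp mN _ _ (ms_cof_pushout_inl mN _ _ (hZcof i)) (hq i)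
  have hv_cof : ∀ i, mN.Cof (v i) := fun i =>
    ms_cof_comp mN _ _ (ms_cof_pushout_inr mN _ _ (hYcof i)) (hq i)
  have hCc : ∀ i, mN.Cofibrant (Cc i) := fun i =>
    ms_cofibrant_of_cof mN (u i) (hYcof i) (hu_cof i)
  have hup : ∀ i, u i ≫ p i = f i := fun i => by
    rw [hu, Category.assoc, hqp]
    exact pushout.inl_desc _ _ _
  have hvp : ∀ i, v i ≫ p i = 𝟙 (Z i) := fun i => by
    rw [hv, Category.assoc, hqp]
    exact pushout.inr_desc _ _ _
  have hWu : ∀ i, mN.W (u i) := fun i =>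
    mN.w_cancel_right (u i) (p i) (hwp i) (by rw [hup]; exact hf i)
  have hWv : ∀ i, mN.W (v i) := fun i =>
    mN.w_cancel_right (v i) (p i) (hwp i) (by rw [hvp]; exact ms_w_id mN _)
  have hFu : mM.W (F.map (u : Y ⟶ Cc)) := keyW mN mM F hF Y Cc u hYcof hCc hu_cof hWu
  have hFv : mM.W (F.map (v : Z ⟶ Cc)) := keyW mN mM F hF Z Cc v hZcof hCc hv_cof hWv
  have hvpPi : CategoryStruct.comp (obj := Fin n → N) (v : Z ⟶ Cc) (p : Cc ⟶ Z) = 𝟙 Z := by funext i; exact hvp i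
  have hFp : mM.W (F.map (p : Cc ⟶ Z)) := mM.w_cancel_left (F.map (v : Z ⟶ Cc)) _ hFv
    (by rw [← F.map_comp, hvpPi, F.map_id]; exact ms_w_id mM _)
  have hupPi : CategoryStruct.comp (obj := Fin n → N) (u : Y ⟶ Cc) (p : Cc ⟶ Z) = (f : Y ⟶ Z) := by funext i; exact hup i
  refine ⟨?_, hcofY, hcofZ⟩
  rw [← hupPi, F.map_comp]
  exact mM.w_comp _ _ hFu hFp
end

section
/- Let A be the non-unital commutative ring whose underlying abelian group is ℤ × ℤ with multiplication (a,b) · (c,d) := (0, 2ac), and let A² be the additive subgroup of A generated by all products u·v with u, v ∈ A. Then A² = {0} × 2ℤ, the quotient abelian group A/A² is isomorphic to ℤ × (ℤ/2ℤ), and in particular A/A² is not a free abelian group (equivalently, not a free ℤ-module). -/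
/-- The multiplication `(a,b) · (c,d) = (0, 2ac)` on the abelian group `ℤ × ℤ`. -/
def amul (x y : ℤ × ℤ) : ℤ × ℤ := (0, 2 * x.1 * y.1)

/-- `A²`: the additive subgroup of `A = ℤ × ℤ` generated by all products `u · v`. -/
def Asq : AddSubgroup (ℤ × ℤ) :=
  AddSubgroup.closure {a : ℤ × ℤ | ∃ u v : ℤ × ℤ, a = amul u v}

lemma asq_eq : Asq = AddSubgroup.prod ⊥ (AddSubgroup.zmultiples (2 : ℤ)) := by
  apply le_antisymm
  · rw [Asq, AddSubgroup.closure_le]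
    rintro a ⟨u, v, rfl⟩
    refine AddSubgroup.mem_prod.2 ⟨AddSubgroup.mem_bot.2 rfl, ⟨u.1 * v.1, ?_⟩⟩
    simp [amul, smul_eq_mul]; ring
  · rintro ⟨a, b⟩ hab
    rw [AddSubgroup.mem_prod] at hab
    obtain ⟨ha, k, hk⟩ := hab
    rw [AddSubgroup.mem_bot] at ha
    have h2 : ((0, 2) : ℤ × ℤ) ∈ Asq :=
      AddSubgroup.subset_closure ⟨(1, 0), (1, 0), by simp [amul]⟩
    have : ((a, b) : ℤ × ℤ) = k • ((0, 2) : ℤ × ℤ) := by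
      simp only [Prod.smul_mk, smul_zero]
      rw [Prod.mk.injEq]
      exact ⟨ha, hk.symm⟩
    rw [this]
    exact AddSubgroup.zsmul_mem _ h2 k

def f : (ℤ × ℤ) →+ ℤ × ZMod 2 :=
  (AddMonoidHom.fst ℤ ℤ).prod ((Int.castAddHom (ZMod 2)).comp (AddMonoidHom.snd ℤ ℤ))

noncomputable def qEquiv : ((ℤ × ℤ) ⧸ Asq) ≃+ ℤ × ZMod 2 := by
  have hf : Function.Surjective f := by
    rintro ⟨a, c⟩
    obtain ⟨b, hb⟩ := ZMod.intCast_surjective (n := 2) c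
    exact ⟨(a, b), by simp [f, hb]⟩
  have hker : f.ker = Asq := by
    rw [asq_eq]
    ext ⟨a, b⟩
    simp only [AddMonoidHom.mem_ker, f, AddMonoidHom.prod_apply, AddMonoidHom.coe_comp,
      AddMonoidHom.coe_fst, AddMonoidHom.coe_snd, Function.comp_apply, Int.coe_castAddHom,
      Prod.mk_eq_zero, AddSubgroup.mem_prod, AddSubgroup.mem_bot,
      AddSubgroup.mem_zmultiples_iff, ZMod.intCast_zmod_eq_zero_iff_dvd]
    constructor
    · rintro ⟨h1, k, rfl⟩
      exact ⟨h1, k, by simp [smul_eq_mul, mul_comm]⟩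
    · rintro ⟨h1, k, hk⟩
      exact ⟨h1, k, by rw [← hk]; simp [smul_eq_mul, mul_comm]⟩
  exact (QuotientAddGroup.quotientAddEquivOfEq hker.symm).trans
    (QuotientAddGroup.quotientKerEquivOfSurjective f hf)

/-- For the non-unital commutative ring `A = ℤ × ℤ` with
`(a,b)·(c,d) = (0,2ac)`, the subgroup `A²` equals `{0} × 2ℤ`, the quotient `A/A²`
is isomorphic to `ℤ × ℤ/2ℤ`, and in particular `A/A²` is not free as a `ℤ`-module. -/
theorem statement10 :
    Asq = AddSubgroup.prod ⊥ (AddSubgroup.zmultiples (2 : ℤ)) ∧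
    Nonempty ((ℤ × ℤ) ⧸ Asq ≃+ ℤ × ZMod 2) ∧
    ¬ Module.Free ℤ ((ℤ × ℤ) ⧸ Asq) := by
  refine ⟨asq_eq, ⟨qEquiv⟩, ?_⟩
  intro hfree
  haveI : Module.Free ℤ (ℤ × ZMod 2) :=
    Module.Free.of_equiv qEquiv.toIntLinearEquiv
  haveI : Module.IsTorsionFree ℤ (ℤ × ZMod 2) :=
    inferInstance
  have h : (2 : ℤ) • ((0, 1) : ℤ × ZMod 2) = 0 := by
    simp [Prod.ext_iff]
    decide
  rcases smul_eq_zero.mp h with h2 | h0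
  · exact two_ne_zero h2
  · exact one_ne_zero (congrArg Prod.snd h0)
end
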